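/- Bias of the SPSA steepest-feasible-descent estimator: let n, d ≥ 1, let x ∈ ℝⁿ, let B be an n×d real matrix, and let J : ℝⁿ → ℝ be three times continuously differentiable. For η > 0 define G(η) = 2^{−d} · Σ_{Δ ∈ {−1,1}^d} [(J(x − η·BΔ) − J(x + η·BΔ))/(2η)]·BΔ ∈ ℝⁿ, i.e., the expectation over a uniformly distributed sign vector Δ ∈ {−1,1}^d of the simultaneous-perturbation estimator. Then there exist constants K ≥ 0 and η₀ > 0 such that for all 0 < η ≤ η₀: ‖G(η) − δ′(x)‖₂ ≤ K·η², where δ′(x) = −B·Bᵀ·∇J(x) is the steepest feasible descent direction; i.e., E_Δ[δ̃(x,Δ,η)] = δ′(x) + O(η²). -/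

import Mathlib

open Matrix Finset

lemma iterWithin_eq {m : ℕ} {f : ℝ → ℝ} (hf : ContDiff ℝ 3 f) (hm : m ≤ 3)
    {s : Set ℝ} (hs : UniqueDiffOn ℝ s) {t : ℝ} (ht : t ∈ s) :
    iteratedDerivWithin m f s t = iteratedDeriv m f t := by
  have h1 : HasFTaylorSeriesUpToOn 3 f (ftaylorSeries ℝ f) s := by
    have := (hf.contDiffOn (s := Set.univ)).ftaylorSeriesWithin uniqueDiffOn_univ
    rw [ftaylorSeriesWithin_univ] at this
    exact this.mono (Set.subset_univ s)
  have h2 := h1.eq_iteratedFDerivWithin_of_uniqueDiffOn (by exact_mod_cast hm) hs ht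
  rw [iteratedDerivWithin_eq_iteratedFDerivWithin, iteratedDeriv_eq_iteratedFDeriv, ← h2]
  rfl

lemma signSum' {d : ℕ} (k l : Fin d) :
    (∑ s : Fin d → Bool, (if s k then (1:ℝ) else -1) * (if s l then 1 else -1))
      = if k = l then (2:ℝ)^d else 0 := by
  rcases eq_or_ne k l with rfl | hkl
  · simp only [if_pos rfl]
    have : ∀ s : Fin d → Bool, (if s k then (1:ℝ) else -1) * (if s k then 1 else -1) = 1 := by
      intro s; by_cases h : s k <;> simp [h]
    rw [Finset.sum_congr rfl fun s _ => this s, Finset.sum_const, Finset.card_univ]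
    simp [Fintype.card_fun]
  · simp only [if_neg hkl]
    apply Finset.sum_ninvolution (fun s => Function.update s l (!(s l)))
    · intro s
      have h1 : Function.update s l (!(s l)) k = s k := Function.update_of_ne hkl _ s
      have h2 : Function.update s l (!(s l)) l = !(s l) := Function.update_self l _ s
      rw [h1, h2]
      by_cases h : s l <;> simp [h] <;> ring
    · intro s _
      intro hcon
      have := congrFun hcon l
      rw [Function.update_self] at this
      simp at this
    · intro s; exact Finset.mem_univ _
    · intro s
      funext j
      rcases eq_or_ne j l with rfl | hj
      · simp [Function.update_self]
      · simp [Function.update_of_ne hj]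

lemma key_taylor {nn : ℕ} (J : (Fin nn → ℝ) → ℝ) (hJ : ContDiff ℝ 3 J)
    (x v : Fin nn → ℝ) :
    ∃ C : ℝ, 0 ≤ C ∧ ∀ η : ℝ, 0 < η → η ≤ 1 →
      |(J (x - η • v) - J (x + η • v)) / (2 * η) + fderiv ℝ J x v| ≤ C * η ^ 2 := by
  set h : ℝ → ℝ := fun t => J (x + t • v) with hh
  have hline : ∀ t : ℝ, ContDiff ℝ 3 (fun t : ℝ => x + t • v) := fun _ =>
    contDiff_const.add (contDiff_id.smul contDiff_const)
  have hch : ContDiff ℝ 3 h := hJ.comp (hline 0)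
  set H : ℝ → ℝ := fun t => h (-t) with hH
  have hcH : ContDiff ℝ 3 H := hch.comp (contDiff_neg)
  -- derivative of h at 0
  have hd0 : deriv h 0 = fderiv ℝ J x v := by
    have hJd : HasFDerivAt J (fderiv ℝ J x) x :=
      (hJ.differentiable (by norm_num)).differentiableAt.hasFDerivAt
    have hl : HasDerivAt (fun t : ℝ => x + t • v) v 0 := by
      simpa using ((hasDerivAt_id (0:ℝ)).smul_const v).const_add x
    have : HasDerivAt h (fderiv ℝ J x v) 0 := by
      have hJd' : HasFDerivAt J (fderiv ℝ J x) (x + (0:ℝ) • v) := by simpa using hJd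
      have := hJd'.comp_hasDerivAt (f := fun t : ℝ => x + t • v) (x := (0:ℝ)) (by simpa using hl)
      exact this
    exact this.deriv
  -- Taylor bounds
  obtain ⟨C₁, hC₁⟩ := exists_taylor_mean_remainder_bound (f := h) (a := 0) (b := 1)
    (n := 2) (by norm_num) (hch.contDiffOn)
  obtain ⟨C₂, hC₂⟩ := exists_taylor_mean_remainder_bound (f := H) (a := 0) (b := 1)
    (n := 2) (by norm_num) (hcH.contDiffOn)
  refine ⟨(|C₁| + |C₂|) / 2, by positivity, fun η hη hη1 => ?_⟩
  have hmem : η ∈ Set.Icc (0:ℝ) 1 := ⟨hη.le, hη1⟩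
  have h0mem : (0:ℝ) ∈ Set.Icc (0:ℝ) 1 := by norm_num
  have hud : UniqueDiffOn ℝ (Set.Icc (0:ℝ) 1) := uniqueDiffOn_Icc (by norm_num)
  have e1 := hC₁ η hmem
  have e2 := hC₂ η hmem
  -- compute the Taylor polynomials
  have hiter : ∀ k : ℕ, k ≤ 3 → iteratedDerivWithin k H (Set.Icc 0 1) 0
      = (-1:ℝ)^k * iteratedDerivWithin k h (Set.Icc 0 1) 0 := by
    intro k hk
    rw [iterWithin_eq hcH hk hud h0mem, iterWithin_eq hch hk hud h0mem]
    have := iteratedDeriv_comp_neg k h 0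
    simpa [hH, smul_eq_mul] using this
  have hth : taylorWithinEval H 2 (Set.Icc 0 1) 0 η - taylorWithinEval h 2 (Set.Icc 0 1) 0 η
      = -(2 * η * deriv h 0) := by
    rw [taylor_within_apply, taylor_within_apply]
    rw [show (2:ℕ)+1 = 3 from rfl]
    rw [Finset.sum_range_succ, Finset.sum_range_succ, Finset.sum_range_one,
        Finset.sum_range_succ, Finset.sum_range_succ, Finset.sum_range_one]
    rw [hiter 0 (by norm_num), hiter 1 (by norm_num), hiter 2 (by norm_num)]
    have h1 : iteratedDerivWithin 1 h (Set.Icc 0 1) 0 = deriv h 0 := by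
      rw [iterWithin_eq hch (by norm_num) hud h0mem, iteratedDeriv_one]
    rw [h1]
    simp only [smul_eq_mul, Nat.factorial_one, Nat.cast_one, inv_one]
    ring
  -- combine
  have hHh : J (x - η • v) = H η ∧ J (x + η • v) = h η := by
    constructor
    · simp [hH, hh, sub_eq_add_neg, neg_smul]
    · rfl
  rw [hHh.1, hHh.2, ← hd0]
  have key : H η - h η + 2 * η * deriv h 0
      = (H η - taylorWithinEval H 2 (Set.Icc 0 1) 0 η)
        - (h η - taylorWithinEval h 2 (Set.Icc 0 1) 0 η) := by
    have := hth; linarith [hth]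
  have habs : |H η - h η + 2 * η * deriv h 0| ≤ (|C₁| + |C₂|) * η ^ 3 := by
    rw [key]
    calc |(H η - taylorWithinEval H 2 (Set.Icc 0 1) 0 η)
        - (h η - taylorWithinEval h 2 (Set.Icc 0 1) 0 η)|
        ≤ |H η - taylorWithinEval H 2 (Set.Icc 0 1) 0 η|
          + |h η - taylorWithinEval h 2 (Set.Icc 0 1) 0 η| := abs_sub _ _
      _ ≤ C₂ * (η - 0) ^ 3 + C₁ * (η - 0) ^ 3 := by
          have := e1; have := e2
          simp only [Real.norm_eq_abs] at e1 e2
          exact add_le_add e2 e1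
      _ ≤ (|C₁| + |C₂|) * η ^ 3 := by
          have hp : (0:ℝ) ≤ η ^ 3 := by positivity
          rw [sub_zero]
          nlinarith [le_abs_self C₁, le_abs_self C₂]
  have hne : (2 * η) ≠ 0 := by positivity
  rw [show (H η - h η) / (2 * η) + deriv h 0
      = (H η - h η + 2 * η * deriv h 0) / (2 * η) by field_simp]
  rw [abs_div, abs_of_pos (by positivity : (0:ℝ) < 2 * η)]
  rw [div_le_iff₀ (by positivity)]
  calc |H η - h η + 2 * η * deriv h 0| ≤ (|C₁| + |C₂|) * η ^ 3 := habs
    _ = (|C₁| + |C₂|) / 2 * η ^ 2 * (2 * η) := by ring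

lemma vv_sum {d : ℕ} (a b : Fin d → ℝ) :
    ∑ s : Fin d → Bool,
      (∑ l, a l * (if s l then (1:ℝ) else -1)) * (∑ k, b k * (if s k then (1:ℝ) else -1))
    = 2^d * ∑ k, a k * b k := by
  have h1 : ∀ s : Fin d → Bool,
      (∑ l, a l * (if s l then (1:ℝ) else -1)) * (∑ k, b k * (if s k then (1:ℝ) else -1))
      = ∑ l, ∑ k, a l * b k * ((if s l then (1:ℝ) else -1) * (if s k then (1:ℝ) else -1)) := by
    intro s
    rw [Finset.sum_mul_sum]
    exact Finset.sum_congr rfl fun l _ => Finset.sum_congr rfl fun k _ => by ring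
  calc ∑ s : Fin d → Bool,
      (∑ l, a l * (if s l then (1:ℝ) else -1)) * (∑ k, b k * (if s k then (1:ℝ) else -1))
      = ∑ l, ∑ k, a l * b k *
          (∑ s : Fin d → Bool, (if s l then (1:ℝ) else -1) * (if s k then (1:ℝ) else -1)) := by
        rw [Finset.sum_congr rfl fun s _ => h1 s, Finset.sum_comm]
        refine Finset.sum_congr rfl fun l _ => ?_
        rw [Finset.sum_comm]
        exact Finset.sum_congr rfl fun k _ => (Finset.mul_sum _ _ _).symm
    _ = ∑ l, ∑ k, a l * b k * (if l = k then (2:ℝ)^d else 0) := by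
        refine Finset.sum_congr rfl fun l _ => Finset.sum_congr rfl fun k _ => ?_
        rw [signSum']
    _ = 2^d * ∑ k, a k * b k := by
        simp only [mul_ite, mul_zero, Finset.sum_ite_eq, Finset.mem_univ, if_true]
        rw [Finset.mul_sum]
        exact Finset.sum_congr rfl fun l _ => by ring

theorem spsa_estimator_bias {n d : ℕ} (hn : 1 ≤ n) (hd : 1 ≤ d)
    (J : (Fin n → ℝ) → ℝ) (hJ : ContDiff ℝ 3 J)
    (x : Fin n → ℝ) (B : Matrix (Fin n) (Fin d) ℝ) :
    ∃ K : ℝ, 0 ≤ K ∧ ∃ η₀ : ℝ, 0 < η₀ ∧ ∀ η : ℝ, 0 < η → η ≤ η₀ →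
      Real.sqrt (∑ i,
        (((2 : ℝ) ^ d)⁻¹ *
            (∑ s : Fin d → Bool,
              ((J (x - η • B.mulVec (fun k => if s k then 1 else -1))
                  - J (x + η • B.mulVec (fun k => if s k then 1 else -1))) / (2 * η))
                * B.mulVec (fun k => if s k then 1 else -1) i)
          - (-(B * Bᵀ).mulVec (fun j => fderiv ℝ J x (Pi.single j 1)) i)) ^ 2)
        ≤ K * η ^ 2 := by
  classical
  set v : (Fin d → Bool) → (Fin n → ℝ) :=
    fun s => B.mulVec (fun k => if s k then (1:ℝ) else -1) with hvdef
  have hv : ∀ s : Fin d → Bool,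
      B.mulVec (fun k => if s k then (1:ℝ) else -1) = v s := fun s => rfl
  set g : Fin n → ℝ := fun j => fderiv ℝ J x (Pi.single j 1) with hgdef
  choose C hC0 hC using fun s : Fin d → Bool => key_taylor J hJ x (v s)
  set Ki : Fin n → ℝ := fun i => ((2:ℝ)^d)⁻¹ * ∑ s, C s * |v s i| with hKidef
  have hKi0 : ∀ i, 0 ≤ Ki i := by
    intro i
    apply mul_nonneg (by positivity)
    exact Finset.sum_nonneg fun s _ => mul_nonneg (hC0 s) (abs_nonneg _)
  refine ⟨Real.sqrt (∑ i, (Ki i)^2), Real.sqrt_nonneg _, 1, one_pos, fun η hη hη1 => ?_⟩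
  simp only [hv]
  -- linearity of the derivative
  have hfd : ∀ w : Fin n → ℝ, fderiv ℝ J x w = ∑ j, w j * g j := by
    intro w
    have hsingle : ∀ j0 : Fin n, (fun j => if j0 = j then (1:ℝ) else 0) = Pi.single j0 1 := by
      intro j0; funext j; simp [Pi.single_apply, eq_comm]
    have := LinearMap.pi_apply_eq_sum_univ ((fderiv ℝ J x) : (Fin n → ℝ) →ₗ[ℝ] ℝ) w
    simpa [smul_eq_mul, hgdef, hsingle] using this
  -- the key algebraic identity
  have hid : ∀ i, ∑ s : Fin d → Bool, (fderiv ℝ J x (v s)) * v s i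
      = 2^d * ((B * Bᵀ).mulVec g i) := by
    intro i
    have hexp : ∀ s : Fin d → Bool, (fderiv ℝ J x (v s)) * v s i
        = (∑ l, (∑ j, g j * B j l) * (if s l then (1:ℝ) else -1))
          * (∑ k, B i k * (if s k then (1:ℝ) else -1)) := by
      intro s
      have e2 : v s i = ∑ k, B i k * (if s k then (1:ℝ) else -1) := by
        simp [hvdef, Matrix.mulVec, dotProduct]
      have e1 : fderiv ℝ J x (v s)
          = ∑ l, (∑ j, g j * B j l) * (if s l then (1:ℝ) else -1) := by
        rw [hfd (v s)]
        have hvj : ∀ j, v s j = ∑ l, B j l * (if s l then (1:ℝ) else -1) := by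
          intro j; simp [hvdef, Matrix.mulVec, dotProduct]
        calc ∑ j, v s j * g j
            = ∑ j, ∑ l, B j l * (if s l then (1:ℝ) else -1) * g j := by
              refine Finset.sum_congr rfl fun j _ => ?_
              rw [hvj j, Finset.sum_mul]
          _ = ∑ l, (∑ j, g j * B j l) * (if s l then (1:ℝ) else -1) := by
              rw [Finset.sum_comm]
              refine Finset.sum_congr rfl fun l _ => ?_
              rw [Finset.sum_mul]
              refine Finset.sum_congr rfl fun j _ => by ring
      rw [e1, e2]
    rw [Finset.sum_congr rfl fun s _ => hexp s, vv_sum]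
    congr 1
    rw [Matrix.mulVec, dotProduct]
    calc ∑ k, (∑ j, g j * B j k) * B i k
        = ∑ k, ∑ j, g j * B j k * B i k := by
          refine Finset.sum_congr rfl fun k _ => ?_
          rw [Finset.sum_mul]
      _ = ∑ j, ∑ k, g j * B j k * B i k := Finset.sum_comm
      _ = ∑ j, (B * Bᵀ) i j * g j := by
          refine Finset.sum_congr rfl fun j _ => ?_
          rw [Matrix.mul_apply, Finset.sum_mul]
          simp only [Matrix.transpose_apply]
          refine Finset.sum_congr rfl fun k _ => by ring
  -- rewrite the error per coordinate
  have hmain : ∀ i,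
      ((2:ℝ)^d)⁻¹ * (∑ s : Fin d → Bool,
          ((J (x - η • v s) - J (x + η • v s)) / (2 * η)) * v s i)
        - (-(B * Bᵀ).mulVec g i)
      = ((2:ℝ)^d)⁻¹ * ∑ s : Fin d → Bool,
          ((J (x - η • v s) - J (x + η • v s)) / (2 * η) + fderiv ℝ J x (v s)) * v s i := by
    intro i
    have h2d : ((2:ℝ)^d) ≠ 0 := by positivity
    have hsplit : ∑ s : Fin d → Bool,
        ((J (x - η • v s) - J (x + η • v s)) / (2 * η) + fderiv ℝ J x (v s)) * v s i
        = (∑ s : Fin d → Bool, ((J (x - η • v s) - J (x + η • v s)) / (2 * η)) * v s i)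
          + ∑ s : Fin d → Bool, (fderiv ℝ J x (v s)) * v s i := by
      rw [← Finset.sum_add_distrib]
      exact Finset.sum_congr rfl fun s _ => by ring
    rw [hsplit, hid i, mul_add]
    field_simp
    ring
  have hbound : ∀ i,
      |((2:ℝ)^d)⁻¹ * (∑ s : Fin d → Bool,
          ((J (x - η • v s) - J (x + η • v s)) / (2 * η)) * v s i)
        - (-(B * Bᵀ).mulVec g i)| ≤ Ki i * η ^ 2 := by
    intro i
    rw [hmain i]
    have hKieq : Ki i * η^2 = ((2:ℝ)^d)⁻¹ * (η^2 * ∑ s : Fin d → Bool, C s * |v s i|) := by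
      simp only [hKidef]; ring
    rw [hKieq, abs_mul, abs_of_nonneg (by positivity : (0:ℝ) ≤ ((2:ℝ)^d)⁻¹)]
    gcongr ((2:ℝ)^d)⁻¹ * ?_
    calc |∑ s : Fin d → Bool,
        ((J (x - η • v s) - J (x + η • v s)) / (2 * η) + fderiv ℝ J x (v s)) * v s i|
        ≤ ∑ s : Fin d → Bool,
          |((J (x - η • v s) - J (x + η • v s)) / (2 * η) + fderiv ℝ J x (v s)) * v s i| :=
          Finset.abs_sum_le_sum_abs _ _
      _ ≤ ∑ s : Fin d → Bool, (C s * η^2) * |v s i| := by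
          refine Finset.sum_le_sum fun s _ => ?_
          rw [abs_mul]
          exact mul_le_mul_of_nonneg_right (hC s η hη hη1) (abs_nonneg _)
      _ = η^2 * ∑ s : Fin d → Bool, C s * |v s i| := by
          rw [Finset.mul_sum]
          exact Finset.sum_congr rfl fun s _ => by ring
  -- combine into the Euclidean norm bound
  calc Real.sqrt (∑ i,
        (((2:ℝ)^d)⁻¹ * (∑ s : Fin d → Bool,
            ((J (x - η • v s) - J (x + η • v s)) / (2 * η)) * v s i)
          - (-(B * Bᵀ).mulVec g i)) ^ 2)
      ≤ Real.sqrt (∑ i, (Ki i * η^2)^2) := by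
        apply Real.sqrt_le_sqrt
        refine Finset.sum_le_sum fun i _ => ?_
        have h1 := hbound i
        have h2 : (0:ℝ) ≤ Ki i * η^2 := mul_nonneg (hKi0 i) (by positivity)
        calc (((2:ℝ)^d)⁻¹ * (∑ s : Fin d → Bool,
            ((J (x - η • v s) - J (x + η • v s)) / (2 * η)) * v s i)
          - (-(B * Bᵀ).mulVec g i)) ^ 2
            = |((2:ℝ)^d)⁻¹ * (∑ s : Fin d → Bool,
            ((J (x - η • v s) - J (x + η • v s)) / (2 * η)) * v s i)
          - (-(B * Bᵀ).mulVec g i)| ^ 2 := (sq_abs _).symm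
          _ ≤ (Ki i * η^2)^2 := by
            apply pow_le_pow_left₀ (abs_nonneg _) h1
    _ = Real.sqrt (∑ i, (Ki i)^2) * η^2 := by
        have : ∑ i, (Ki i * η^2)^2 = (∑ i, (Ki i)^2) * (η^2)^2 := by
          rw [Finset.sum_mul]
          exact Finset.sum_congr rfl fun i _ => by ring
        rw [this, Real.sqrt_mul (Finset.sum_nonneg fun i _ => sq_nonneg _),
          Real.sqrt_sq (by positivity)]
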